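/- Let G be a finite simple graph with vertex set V and edge set E, and let k ≥ 1 and R ≥ 0 be integers. Then G has a k-colorable subgraph with R edges (i.e., there exists F ⊆ E with |F| = R such that the graph (V, F) is k-colorable) if and only if there exist x ∈ ℂ^V and y ∈ ℂ^E satisfying: Σ_{{i,j} ∈ E} y_{ij} − R = 0; x_i^k = 1 for every vertex i ∈ V; and, for every edge {i,j} ∈ E, y_{ij}² − y_{ij} = 0 and y_{ij}·(x_i^{k−1} + x_i^{k−2}·x_j + ⋯ + x_j^{k−1}) = 0. -/

import Mathlib

lemma aux_geom_sum_eq_zero {k : ℕ} {a b : ℂ} (ha : a ^ k = 1) (hb : b ^ k = 1) (hab : a ≠ b) :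
    ∑ t ∈ Finset.range k, a ^ (k - 1 - t) * b ^ t = 0 := by
  have h := geom_sum₂_mul b a k
  rw [hb, ha, sub_self] at h
  have hba : b - a ≠ 0 := sub_ne_zero.mpr (Ne.symm hab)
  have h0 := (mul_eq_zero.mp h).resolve_right hba
  calc ∑ t ∈ Finset.range k, a ^ (k - 1 - t) * b ^ t
      = ∑ t ∈ Finset.range k, b ^ t * a ^ (k - 1 - t) := by
        exact Finset.sum_congr rfl fun t _ => mul_comm _ _
    _ = 0 := h0

lemma aux_geom_sum_ne_zero {k : ℕ} (hk : 1 ≤ k) {a : ℂ} (ha : a ^ k = 1) :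
    ∑ t ∈ Finset.range k, a ^ (k - 1 - t) * a ^ t ≠ 0 := by
  have ha0 : a ≠ 0 := by
    intro h; rw [h, zero_pow (by omega)] at ha; exact one_ne_zero ha.symm
  have : ∑ t ∈ Finset.range k, a ^ (k - 1 - t) * a ^ t = (k : ℂ) * a ^ (k - 1) := by
    rw [Finset.sum_congr rfl (fun t ht => ?_), Finset.sum_const, Finset.card_range,
      nsmul_eq_mul]
    rw [← pow_add]
    congr 1
    have := Finset.mem_range.mp ht
    omega
  rw [this]
  exact mul_ne_zero (Nat.cast_ne_zero.mpr (by omega)) (pow_ne_zero _ ha0)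

theorem kColorableSubgraph_iff_polynomial_system (n k R : ℕ) (hk : 1 ≤ k)
    (G : SimpleGraph (Fin n)) [DecidableRel G.Adj] :
    (∃ F : Finset (Sym2 (Fin n)), (F : Set (Sym2 (Fin n))) ⊆ G.edgeSet ∧ F.card = R ∧
        (SimpleGraph.fromEdgeSet (F : Set (Sym2 (Fin n)))).Colorable k) ↔
      ∃ (x : Fin n → ℂ) (y : Sym2 (Fin n) → ℂ),
        ((∑ e ∈ G.edgeFinset, y e) - (R : ℂ) = 0) ∧
        (∀ i : Fin n, x i ^ k = 1) ∧
        (∀ e ∈ G.edgeFinset, y e ^ 2 - y e = 0) ∧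
        (∀ i j : Fin n, G.Adj i j →
          y s(i, j) * ∑ t ∈ Finset.range k, x i ^ (k - 1 - t) * x j ^ t = 0) := by
  classical
  constructor
  · rintro ⟨F, hFE, hFcard, ⟨c⟩⟩
    set ζ : ℂ := Complex.exp (2 * Real.pi * Complex.I / k) with hζdef
    have hζ : IsPrimitiveRoot ζ k := Complex.isPrimitiveRoot_exp k (by omega)
    refine ⟨fun i => ζ ^ (c i : ℕ), fun e => if e ∈ F then 1 else 0, ?_, ?_, ?_, ?_⟩
    · rw [Finset.sum_boole, Finset.filter_mem_eq_inter,
        Finset.inter_eq_right.mpr (fun e he => SimpleGraph.mem_edgeFinset.mpr (hFE he)), hFcard,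
        sub_self]
    · intro i
      rw [← pow_mul, mul_comm, pow_mul, hζ.pow_eq_one, one_pow]
    · intro e _
      by_cases h : e ∈ F <;> simp [h]
    · intro i j hij
      by_cases h : s(i, j) ∈ F
      · have hadj : (SimpleGraph.fromEdgeSet (F : Set (Sym2 (Fin n)))).Adj i j := by
          rw [SimpleGraph.fromEdgeSet_adj]
          exact ⟨h, hij.ne⟩
        have hc := c.valid hadj
        have hne : ζ ^ (c i : ℕ) ≠ ζ ^ (c j : ℕ) := by
          intro heq
          exact hc (Fin.ext (hζ.pow_inj (c i).isLt (c j).isLt heq))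
        rw [aux_geom_sum_eq_zero (by rw [← pow_mul, mul_comm, pow_mul, hζ.pow_eq_one, one_pow])
          (by rw [← pow_mul, mul_comm, pow_mul, hζ.pow_eq_one, one_pow]) hne, mul_zero]
      · simp [h]
  · rintro ⟨x, y, hsum, hx, hy2, hyedge⟩
    set F : Finset (Sym2 (Fin n)) := G.edgeFinset.filter (fun e => y e = 1) with hFdef
    have hy01 : ∀ e ∈ G.edgeFinset, y e = 0 ∨ y e = 1 := by
      intro e he
      have := hy2 e he
      have : y e * (y e - 1) = 0 := by ring_nf; ring_nf at this; linear_combination this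
      rcases mul_eq_zero.mp this with h | h
      · exact Or.inl h
      · exact Or.inr (sub_eq_zero.mp h)
    have hFcard : F.card = R := by
      have : ∑ e ∈ G.edgeFinset, y e = ∑ e ∈ G.edgeFinset, (if y e = 1 then (1 : ℂ) else 0) := by
        refine Finset.sum_congr rfl fun e he => ?_
        rcases hy01 e he with h | h <;> simp [h]
      rw [this, Finset.sum_boole] at hsum
      have : ((F.card : ℂ)) = (R : ℂ) := by
        rw [hFdef]; linear_combination hsum
      exact_mod_cast this
    refine ⟨F, fun e he => SimpleGraph.mem_edgeFinset.mp (Finset.mem_filter.mp he).1, hFcard, ?_⟩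
    have hxmem : ∀ i, x i ∈ Polynomial.nthRootsFinset k (1 : ℂ) := fun i =>
      (Polynomial.mem_nthRootsFinset (by omega) 1).mpr (hx i)
    have hvalid : ∀ {i j : Fin n},
        (SimpleGraph.fromEdgeSet (F : Set (Sym2 (Fin n)))).Adj i j → x i ≠ x j := by
      intro i j hadj heq
      rw [SimpleGraph.fromEdgeSet_adj] at hadj
      obtain ⟨hmem, hne⟩ := hadj
      have hmem' := Finset.mem_filter.mp hmem
      have hGadj : G.Adj i j := (SimpleGraph.mem_edgeSet G).mp (SimpleGraph.mem_edgeFinset.mp hmem'.1)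
      have h0 := hyedge i j hGadj
      rw [hmem'.2, one_mul] at h0
      rw [heq] at h0
      exact aux_geom_sum_ne_zero hk (hx j) h0
    have col : (SimpleGraph.fromEdgeSet (F : Set (Sym2 (Fin n)))).Coloring
        { z // z ∈ Polynomial.nthRootsFinset k (1 : ℂ) } :=
      SimpleGraph.Coloring.mk (fun i => ⟨x i, hxmem i⟩)
        (fun hadj h => hvalid hadj (congrArg Subtype.val h))
    have hcard : Fintype.card { z // z ∈ Polynomial.nthRootsFinset k (1 : ℂ) } ≤ k := by
      rw [Fintype.card_coe]
      exact le_trans (Multiset.toFinset_card_le _) (by simpa using Polynomial.card_nthRoots k (1 : ℂ))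
    exact col.colorable.mono hcard
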